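/- Let a < b be real numbers, let h : ℝ → ℝ be continuous on [a, b] and concave on [a, b], and let μ be a probability measure on ℝ with μ([a, b]) = 1. Then h(∫ x dμ(x)) − ∫ h(x) dμ(x) ≤ 2·h((a + b)/2) − h(a) − h(b). -/

import Mathlib

open MeasureTheory Real

/-- For a concave function `g` on `[a,b]` vanishing at the endpoints,
`g x ≤ 2 g((a+b)/2)` on `[a,b]`. -/
lemma concave_le_two_mid (a b : ℝ) (hab : a < b) (g : ℝ → ℝ)
    (hg : ConcaveOn ℝ (Set.Icc a b) g) (hga : g a = 0) (hgb : g b = 0)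
    {x : ℝ} (hx : x ∈ Set.Icc a b) : g x ≤ 2 * g ((a + b) / 2) := by
  set m : ℝ := (a + b) / 2 with hm
  have ha' : a ∈ Set.Icc a b := ⟨le_refl a, hab.le⟩
  have hb' : b ∈ Set.Icc a b := ⟨hab.le, le_refl b⟩
  have hgm : 0 ≤ g m := by
    have := hg.2 ha' hb' (by norm_num : (0:ℝ) ≤ 1/2) (by norm_num : (0:ℝ) ≤ 1/2)
      (by norm_num)
    simp only [smul_eq_mul] at this
    have hmm : (1/2 : ℝ) * a + (1/2 : ℝ) * b = m := by rw [hm]; ring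
    rw [hmm] at this
    linarith
  rcases le_or_gt x m with hxm | hxm
  · -- x ≤ m < b
    have hxb : x < b := lt_of_le_of_lt hxm (by rw [hm]; linarith)
    have hbx : (0:ℝ) < b - x := by linarith
    set t : ℝ := (b - m) / (b - x) with ht
    set s : ℝ := (m - x) / (b - x) with hs
    have ht0 : 0 ≤ t := div_nonneg (by rw [hm]; linarith) hbx.le
    have hs0 : 0 ≤ s := div_nonneg (by linarith) hbx.le
    have hts : t + s = 1 := by rw [ht, hs, ← add_div, div_eq_one_iff_eq hbx.ne']; ring
    have hcomb : t * x + s * b = m := by rw [ht, hs, div_mul_eq_mul_div, div_mul_eq_mul_div, ← add_div, div_eq_iff hbx.ne']; ring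
    have := hg.2 hx hb' ht0 hs0 hts
    simp only [smul_eq_mul] at this
    rw [hcomb, hgb] at this
    have hthalf : (1/2 : ℝ) ≤ t := by
      rw [ht, le_div_iff₀ hbx]
      have hx0 : a ≤ x := hx.1
      rw [hm]; linarith
    rcases le_or_gt (g x) 0 with hgx | hgx
    · linarith
    · nlinarith
  · -- a < m < x
    have hax : a < x := lt_of_lt_of_le (by rw [hm]; linarith) hxm.le
    have hxa : (0:ℝ) < x - a := by linarith
    set s : ℝ := (x - m) / (x - a) with hs
    set t : ℝ := (m - a) / (x - a) with ht
    have hs0 : 0 ≤ s := div_nonneg (by linarith) hxa.le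
    have ht0 : 0 ≤ t := div_nonneg (by rw [hm]; linarith) hxa.le
    have hts : s + t = 1 := by rw [ht, hs, ← add_div, div_eq_one_iff_eq hxa.ne']; ring
    have hcomb : s * a + t * x = m := by rw [ht, hs, div_mul_eq_mul_div, div_mul_eq_mul_div, ← add_div, div_eq_iff hxa.ne']; ring
    have := hg.2 ha' hx hs0 ht0 hts
    simp only [smul_eq_mul] at this
    rw [hcomb, hga] at this
    have hthalf : (1/2 : ℝ) ≤ t := by
      rw [ht, le_div_iff₀ hxa]
      have hxb : x ≤ b := hx.2
      rw [hm]; linarith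
    rcases le_or_gt (g x) 0 with hgx | hgx
    · linarith
    · nlinarith

/-- **Simic's bound on the Jensen gap (Lemma 2 of the paper).**
For `h` continuous and concave on `[a, b]` and a probability measure `μ` on `ℝ`
concentrated on `[a, b]`, the Jensen gap `h(E[X]) − E[h(X)]` is bounded by
`2 h((a+b)/2) − h(a) − h(b)`. -/
theorem jensen_gap_le
    (a b : ℝ) (hab : a < b) (h : ℝ → ℝ)
    (hcont : ContinuousOn h (Set.Icc a b)) (hconc : ConcaveOn ℝ (Set.Icc a b) h)
    (μ : Measure ℝ) [IsProbabilityMeasure μ] (hμ : μ (Set.Icc a b) = 1) :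
    h (∫ x, x ∂μ) - ∫ x, h x ∂μ ≤ 2 * h ((a + b) / 2) - h a - h b := by
  have hba : (0:ℝ) < b - a := by linarith
  set c : ℝ := (h b - h a) / (b - a) with hc
  set L : ℝ → ℝ := fun x => h a + c * (x - a) with hL
  -- a.e. membership
  have hae : ∀ᵐ x ∂μ, x ∈ Set.Icc a b := by
    have hcompl : μ (Set.Icc a b)ᶜ = 0 := by
      rw [measure_compl measurableSet_Icc (by simp [hμ]), hμ, measure_univ, tsub_self]
    exact MeasureTheory.mem_ae_iff.2 hcompl
  have hres : μ.restrict (Set.Icc a b) = μ :=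
    Measure.restrict_eq_self_of_ae_mem hae
  -- integrability
  have hIntH : Integrable h μ := by
    rw [← hres]
    exact hcont.integrableOn_compact isCompact_Icc
  have hIntId : Integrable (fun x : ℝ => x) μ := by
    rw [← hres]
    exact continuous_id.continuousOn.integrableOn_compact isCompact_Icc
  have hIntL : Integrable L μ :=
    (integrable_const (h a)).add ((hIntId.sub (integrable_const a)).const_mul c)
  set I : ℝ := ∫ x, x ∂μ with hI
  -- mean lies in the interval
  have hIa : a ≤ I := by
    have : ∫ _x, a ∂μ ≤ ∫ x, x ∂μ :=
      integral_mono_ae (integrable_const a) hIntId (hae.mono fun x hx => hx.1)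
    simpa using this
  have hIb : I ≤ b := by
    have : ∫ x, x ∂μ ≤ ∫ _x, b ∂μ :=
      integral_mono_ae hIntId (integrable_const b) (hae.mono fun x hx => hx.2)
    simpa using this
  -- integral of L
  have hInt2 : Integrable (fun x : ℝ => c * (x - a)) μ :=
    (hIntId.sub (integrable_const a)).const_mul c
  have hIntLval : ∫ x, L x ∂μ = h a + c * (I - a) := by
    simp only [hL]
    rw [integral_add (integrable_const (h a)) hInt2, integral_const, integral_const_mul c fun x => x - a,
      integral_sub hIntId (integrable_const a), integral_const]
    simp [hI]
  -- secant lies below h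
  have hLleH : ∀ x ∈ Set.Icc a b, L x ≤ h x := by
    intro x hx
    set t : ℝ := (b - x) / (b - a) with htd
    set s : ℝ := (x - a) / (b - a) with hsd
    have ht0 : 0 ≤ t := div_nonneg (by linarith [hx.2]) hba.le
    have hs0 : 0 ≤ s := div_nonneg (by linarith [hx.1]) hba.le
    have hts : t + s = 1 := by rw [htd, hsd, ← add_div, div_eq_one_iff_eq hba.ne']; ring
    have hcomb : t * a + s * b = x := by rw [htd, hsd, div_mul_eq_mul_div, div_mul_eq_mul_div, ← add_div, div_eq_iff hba.ne']; ring
    have := hconc.2 ⟨le_refl a, hab.le⟩ ⟨hab.le, le_refl b⟩ ht0 hs0 hts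
    simp only [smul_eq_mul] at this
    rw [hcomb] at this
    have hLx : L x = t * h a + s * h b := by
      rw [hL, hc, htd, hsd]; field_simp; ring
    linarith [hLx ▸ this]
  -- g := h - L is concave on [a,b], vanishes at endpoints
  set g : ℝ → ℝ := fun x => h x - L x with hg
  have hgconc : ConcaveOn ℝ (Set.Icc a b) g := by
    refine ⟨convex_Icc a b, fun x hx y hy t s ht hs hts => ?_⟩
    have := hconc.2 hx hy ht hs hts
    simp only [smul_eq_mul, hg, hL] at this ⊢
    have hlin : t * (h a + c * (x - a)) + s * (h a + c * (y - a))
        = h a + c * (t * x + s * y - a) := by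
      have hs' : s = 1 - t := by linarith
      rw [hs']; ring
    linarith
  have hga : g a = 0 := by simp [hg, hL]
  have hgb : g b = 0 := by
    simp only [hg, hL, hc]
    field_simp
    ring
  have hgap : ∀ x ∈ Set.Icc a b, h x - L x ≤ 2 * h ((a+b)/2) - h a - h b := by
    intro x hx
    have key := concave_le_two_mid a b hab g hgconc hga hgb hx
    have hm : g ((a+b)/2) = h ((a+b)/2) - (h a + h b) / 2 := by
      simp only [hg, hL, hc]
      field_simp
      ring
    rw [hm] at key
    simp only [hg] at key
    linarith
  -- put it together
  have h1 : ∫ x, L x ∂μ ≤ ∫ x, h x ∂μ :=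
    integral_mono_ae hIntL hIntH (hae.mono fun x hx => hLleH x hx)
  have h2 : h I - L I ≤ 2 * h ((a+b)/2) - h a - h b := hgap I ⟨hIa, hIb⟩
  have h3 : L I = h a + c * (I - a) := rfl
  linarith [hIntLval ▸ h1]
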